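/- Let s ∈ (0, 1/2). Define the infinite matrix Â by Â_{mn} = m·n^{−2} if n ≥ m and Â_{mn} = m^{s−1}·n^{−s} if m > n (for m,n ≥ 1; the two formulas agree when m = n). Then Â defines a bounded operator on ℓ²: there exists C > 0 such that for every finitely supported sequence (x_n)_{n≥1} of nonnegative reals, ∑_{m≥1} ( ∑_{n≥1} Â_{mn} x_n )² ≤ C · ∑_{n≥1} x_n². -/

import Mathlib

open Real Finset

open Real Finset

private lemma tail_step {c x : ℝ} (hc : 0 < c) (hx : 1 ≤ x) :
    c * (x + 1) ^ (-(c + 1)) ≤ x ^ (-c) - (x + 1) ^ (-c) := by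
  have hx0 : 0 < x := lt_of_lt_of_le one_pos hx
  have hx1 : 0 < x + 1 := by linarith
  have hA : 0 < x ^ c := rpow_pos_of_pos hx0 c
  have hB : 0 < (x + 1) ^ c := rpow_pos_of_pos hx1 c
  have hAB : x ^ c ≤ (x + 1) ^ c := rpow_le_rpow hx0.le (by linarith) hc.le
  have key : c * x ^ c ≤ ((x + 1) ^ c - x ^ c) * (x + 1) := by
    rcases le_or_gt c 1 with h1 | h1
    · have hber := rpow_one_add_le_one_add_mul_self (s := -(1 / (x + 1))) (p := c)
        (by rw [neg_le_neg_iff, div_le_one hx1]; linarith) hc.le h1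
      have e : (1 : ℝ) + -(1 / (x + 1)) = x / (x + 1) := by field_simp; ring
      rw [e, div_rpow hx0.le hx1.le, div_le_iff₀ hB] at hber
      have h2 := mul_le_mul_of_nonneg_right hber hx1.le
      have e2 : (1 + c * -(1 / (x + 1))) * (x + 1) ^ c * (x + 1)
          = (x + 1) * (x + 1) ^ c - c * (x + 1) ^ c := by field_simp; ring
      rw [e2] at h2
      have h3 := mul_le_mul_of_nonneg_left hAB hc.le
      nlinarith
    · have hber := one_add_mul_self_le_rpow_one_add (s := 1 / x) (p := c)
        (le_trans (by norm_num) (le_of_lt (by positivity : (0:ℝ) < 1 / x))) h1.le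
      have e : (1 : ℝ) + 1 / x = (x + 1) / x := by field_simp
      rw [e, div_rpow (by linarith) hx0.le, le_div_iff₀ hA] at hber
      have h2 := mul_le_mul_of_nonneg_right hber hx0.le
      have e2 : (1 + c * (1 / x)) * x ^ c * x = x ^ c * x + c * x ^ c := by
        field_simp
      rw [e2] at h2
      linarith
  have e1 : (x + 1) ^ (-(c + 1)) = ((x + 1) ^ c * (x + 1))⁻¹ := by
    rw [rpow_neg hx1.le, rpow_add_one hx1.ne']
  have e2 : x ^ (-c) = (x ^ c)⁻¹ := rpow_neg hx0.le c
  have e3 : (x + 1) ^ (-c) = ((x + 1) ^ c)⁻¹ := rpow_neg hx1.le c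
  have e4 : (x ^ c)⁻¹ - ((x + 1) ^ c)⁻¹ = ((x + 1) ^ c - x ^ c) / (x ^ c * (x + 1) ^ c) := by
    field_simp
  rw [e1, e2, e3, e4, ← div_eq_mul_inv, div_le_div_iff₀ (by positivity) (by positivity)]
  nlinarith [mul_le_mul_of_nonneg_right key hB.le]

private lemma head_step {c x : ℝ} (hc : 0 < c) (hc1 : c ≤ 1) (hx : 1 ≤ x) :
    c * (x + 1) ^ (c - 1) ≤ (x + 1) ^ c - x ^ c := by
  have hx0 : 0 < x := lt_of_lt_of_le one_pos hx
  have hx1 : 0 < x + 1 := by linarith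
  have hA : 0 < x ^ c := rpow_pos_of_pos hx0 c
  have hB : 0 < (x + 1) ^ c := rpow_pos_of_pos hx1 c
  have hber := rpow_one_add_le_one_add_mul_self (s := -(1 / (x + 1))) (p := c)
    (by rw [neg_le_neg_iff, div_le_one hx1]; linarith) hc.le hc1
  have e : (1 : ℝ) + -(1 / (x + 1)) = x / (x + 1) := by field_simp; ring
  rw [e, div_rpow hx0.le hx1.le, div_le_iff₀ hB] at hber
  have h2 := mul_le_mul_of_nonneg_right hber hx1.le
  have e3 : (1 + c * -(1 / (x + 1))) * (x + 1) ^ c * (x + 1)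
      = (x + 1) * (x + 1) ^ c - c * (x + 1) ^ c := by field_simp; ring
  rw [e3] at h2
  have e2 : (x + 1) ^ (c - 1) = (x + 1) ^ c / (x + 1) := by
    rw [rpow_sub hx1, rpow_one]
  rw [e2, ← mul_div_assoc, div_le_iff₀ hx1]
  nlinarith




private lemma tail_sum {c : ℝ} (hc : 0 < c) (m : ℕ) (F : Finset ℕ)
    (hF : ∀ n ∈ F, m ≤ n) :
    ∑ n ∈ F, ((n : ℝ) + 1) ^ (-(c + 1)) ≤ (1 + 1 / c) * ((m : ℝ) + 1) ^ (-c) := by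
  have hm1 : (0:ℝ) < (m:ℝ) + 1 := by positivity
  have key : ∀ d : ℕ, ∑ n ∈ Finset.Icc m (m + d), ((n : ℝ) + 1) ^ (-(c + 1)) ≤
      ((m : ℝ) + 1) ^ (-(c + 1)) +
        ((m : ℝ) + 1) ^ (-c) / c - ((m : ℝ) + (d : ℝ) + 1) ^ (-c) / c := by
    intro d
    induction d with
    | zero => simp
    | succ d ih =>
      have hins : insert (m + d + 1) (Finset.Icc m (m + d)) = Finset.Icc m (m + (d + 1)) := by
        rw [← add_assoc]
        exact Finset.insert_Icc_right_eq_Icc_succ (by simp; omega)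
      rw [← hins, Finset.sum_insert (by simp)]
      have hstep := tail_step hc (x := (m : ℝ) + (d : ℝ) + 1)
        (by have : (0:ℝ) ≤ (m:ℝ) := Nat.cast_nonneg m
            have : (0:ℝ) ≤ (d:ℝ) := Nat.cast_nonneg d
            linarith)
      have hterm : ((↑(m + d + 1) : ℝ) + 1) ^ (-(c + 1))
          ≤ ((m : ℝ) + (d : ℝ) + 1) ^ (-c) / c - ((m : ℝ) + (d : ℝ) + 1 + 1) ^ (-c) / c := by
        rw [← sub_div, le_div_iff₀ hc]
        push_cast
        nlinarith [hstep]
      push_cast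
      rw [show (m : ℝ) + ((d : ℝ) + 1) + 1 = (m : ℝ) + (d : ℝ) + 1 + 1 from by ring]
      push_cast at hterm
      linarith [ih, hterm]
  -- reduce F to an interval
  classical
  set K := F.sup id with hK
  have hsub : F ⊆ Finset.Icc m (m + (K - m)) := by
    intro n hn
    rw [Finset.mem_Icc]
    refine ⟨hF n hn, ?_⟩
    have h := Finset.le_sup (f := id) hn
    simp only [id] at h
    omega
  have h1 : ∑ n ∈ F, ((n : ℝ) + 1) ^ (-(c + 1))
      ≤ ∑ n ∈ Finset.Icc m (m + (K - m)), ((n : ℝ) + 1) ^ (-(c + 1)) :=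
    Finset.sum_le_sum_of_subset_of_nonneg hsub (fun n _ _ => by positivity)
  have h2 := key (K - m)
  have h3 : ((m : ℝ) + 1) ^ (-(c + 1)) ≤ ((m : ℝ) + 1) ^ (-c) :=
    rpow_le_rpow_of_exponent_le (by linarith) (by linarith)
  have h4 : (0:ℝ) ≤ ((m : ℝ) + ((K - m : ℕ) : ℝ) + 1) ^ (-c) := by positivity
  have h5 : (0:ℝ) < 1 / c := by positivity
  have h6 : (0:ℝ) ≤ ((m : ℝ) + 1) ^ (-c) := by positivity
  have e : (1 + 1 / c) * ((m : ℝ) + 1) ^ (-c)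
      = ((m : ℝ) + 1) ^ (-c) + ((m : ℝ) + 1) ^ (-c) / c := by ring
  rw [e]
  have h7 : (0:ℝ) ≤ ((m : ℝ) + ((K - m : ℕ) : ℝ) + 1) ^ (-c) / c := by positivity
  linarith

private lemma head_sum {c : ℝ} (hc : 0 < c) (hc1 : c ≤ 1) (m : ℕ) (F : Finset ℕ)
    (hF : ∀ n ∈ F, n ≤ m) :
    ∑ n ∈ F, ((n : ℝ) + 1) ^ (c - 1) ≤ (1 + 1 / c) * ((m : ℝ) + 1) ^ c := by
  have hm1 : (0:ℝ) < (m:ℝ) + 1 := by positivity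
  have key : ∀ k : ℕ, ∑ n ∈ Finset.range (k + 1), ((n : ℝ) + 1) ^ (c - 1)
      ≤ 1 + ((k : ℝ) + 1) ^ c / c - 1 / c := by
    intro k
    induction k with
    | zero => simp [Real.one_rpow]
    | succ k ih =>
      rw [Finset.sum_range_succ]
      have hstep := head_step hc hc1 (x := (k : ℝ) + 1)
        (by have : (0:ℝ) ≤ (k:ℝ) := Nat.cast_nonneg k; linarith)
      have hterm : ((↑(k + 1) : ℝ) + 1) ^ (c - 1)
          ≤ ((k : ℝ) + 1 + 1) ^ c / c - ((k : ℝ) + 1) ^ c / c := by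
        rw [← sub_div, le_div_iff₀ hc]
        push_cast
        nlinarith [hstep]
      push_cast
      push_cast at hterm
      linarith [ih, hterm]
  have hsub : F ⊆ Finset.range (m + 1) := by
    intro n hn; rw [Finset.mem_range]; exact Nat.lt_succ_of_le (hF n hn)
  have h1 : ∑ n ∈ F, ((n : ℝ) + 1) ^ (c - 1)
      ≤ ∑ n ∈ Finset.range (m + 1), ((n : ℝ) + 1) ^ (c - 1) :=
    Finset.sum_le_sum_of_subset_of_nonneg hsub (fun n _ _ => by positivity)
  have h2 := key m
  have hP : (1:ℝ) ≤ ((m : ℝ) + 1) ^ c := by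
    have := rpow_le_rpow (by norm_num : (0:ℝ) ≤ 1) (by linarith : (1:ℝ) ≤ (m:ℝ) + 1) hc.le
    rwa [one_rpow] at this
  have h7 : (0:ℝ) < 1 / c := by positivity
  have e : (1 + 1 / c) * ((m : ℝ) + 1) ^ c
      = ((m : ℝ) + 1) ^ c + ((m : ℝ) + 1) ^ c / c := by ring
  rw [e]
  linarith

private lemma half_head_sum (m : ℕ) (F : Finset ℕ) (hF : ∀ n ∈ F, n ≤ m) :
    ∑ n ∈ F, ((n : ℝ) + 1) ^ (1/2 : ℝ) ≤ ((m : ℝ) + 1) * ((m : ℝ) + 1) ^ (1/2 : ℝ) := by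
  have hb : ∀ n ∈ F, ((n : ℝ) + 1) ^ (1/2 : ℝ) ≤ ((m : ℝ) + 1) ^ (1/2 : ℝ) := by
    intro n hn
    have : (n:ℝ) ≤ (m:ℝ) := Nat.cast_le.mpr (hF n hn)
    exact rpow_le_rpow (by positivity) (by linarith) (by norm_num)
  calc ∑ n ∈ F, ((n : ℝ) + 1) ^ (1/2 : ℝ)
      ≤ F.card • (((m : ℝ) + 1) ^ (1/2 : ℝ)) := Finset.sum_le_card_nsmul _ _ _ hb
    _ = (F.card : ℝ) * ((m : ℝ) + 1) ^ (1/2 : ℝ) := nsmul_eq_mul _ _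
    _ ≤ ((m : ℝ) + 1) * ((m : ℝ) + 1) ^ (1/2 : ℝ) := by
        have hcard : F.card ≤ m + 1 := by
          have := Finset.card_le_card (Finset.subset_iff.mpr
            (fun n hn => Finset.mem_range.mpr (Nat.lt_succ_of_le (hF n hn))))
          simpa [Finset.card_range] using this
        have : (F.card : ℝ) ≤ (m : ℝ) + 1 := by exact_mod_cast hcard
        have h0 : (0:ℝ) ≤ ((m : ℝ) + 1) ^ (1/2 : ℝ) := by positivity
        nlinarith





private lemma row_bound {s : ℝ} (hs0 : 0 < s) (hs : s < 1/2) (m : ℕ) (F : Finset ℕ) :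
    ∑ n ∈ F, (if m ≤ n then ((m : ℝ) + 1) * ((n : ℝ) + 1) ^ (-2 : ℝ)
        else ((m : ℝ) + 1) ^ (s - 1) * ((n : ℝ) + 1) ^ (-s)) * ((n : ℝ) + 1) ^ (-(1/2) : ℝ)
      ≤ (3 + 2 * (1 / (1/2 - s))) * ((m : ℝ) + 1) ^ (-(1/2) : ℝ) := by
  have hc : 0 < 1/2 - s := by linarith
  have hm : (0:ℝ) < (m : ℝ) + 1 := by positivity
  rw [← Finset.sum_filter_add_sum_filter_not F (fun n => m ≤ n)]
  have part1 : ∑ n ∈ F.filter (fun n => m ≤ n),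
      (if m ≤ n then ((m : ℝ) + 1) * ((n : ℝ) + 1) ^ (-2 : ℝ)
        else ((m : ℝ) + 1) ^ (s - 1) * ((n : ℝ) + 1) ^ (-s)) * ((n : ℝ) + 1) ^ (-(1/2) : ℝ)
      ≤ (5/3) * ((m : ℝ) + 1) ^ (-(1/2) : ℝ) := by
    have e : ∀ n ∈ F.filter (fun n => m ≤ n),
        (if m ≤ n then ((m : ℝ) + 1) * ((n : ℝ) + 1) ^ (-2 : ℝ)
          else ((m : ℝ) + 1) ^ (s - 1) * ((n : ℝ) + 1) ^ (-s)) * ((n : ℝ) + 1) ^ (-(1/2) : ℝ)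
        = ((m : ℝ) + 1) * ((n : ℝ) + 1) ^ (-((3:ℝ)/2 + 1)) := by
      intro n hn
      have hn2 := (Finset.mem_filter.mp hn).2
      have hn1 : (0:ℝ) < (n : ℝ) + 1 := by positivity
      rw [if_pos hn2, mul_assoc, ← rpow_add hn1]
      norm_num
    rw [Finset.sum_congr rfl e, ← Finset.mul_sum]
    have h := tail_sum (c := 3/2) (by norm_num) m (F.filter (fun n => m ≤ n))
      (fun n hn => (Finset.mem_filter.mp hn).2)
    have em : ((m : ℝ) + 1) * ((m : ℝ) + 1) ^ (-(3/2) : ℝ) = ((m : ℝ) + 1) ^ (-(1/2) : ℝ) := by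
      nth_rewrite 1 [← rpow_one ((m : ℝ) + 1)]
      rw [← rpow_add hm]; norm_num
    calc ((m : ℝ) + 1) * ∑ n ∈ F.filter (fun n => m ≤ n), ((n : ℝ) + 1) ^ (-((3:ℝ)/2 + 1))
        ≤ ((m : ℝ) + 1) * ((1 + 1 / (3/2)) * ((m : ℝ) + 1) ^ (-(3/2) : ℝ)) :=
          mul_le_mul_of_nonneg_left h hm.le
      _ = (5/3) * (((m : ℝ) + 1) * ((m : ℝ) + 1) ^ (-(3/2) : ℝ)) := by ring
      _ = (5/3) * ((m : ℝ) + 1) ^ (-(1/2) : ℝ) := by rw [em]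
  have part2 : ∑ n ∈ F.filter (fun n => ¬ m ≤ n),
      (if m ≤ n then ((m : ℝ) + 1) * ((n : ℝ) + 1) ^ (-2 : ℝ)
        else ((m : ℝ) + 1) ^ (s - 1) * ((n : ℝ) + 1) ^ (-s)) * ((n : ℝ) + 1) ^ (-(1/2) : ℝ)
      ≤ (1 + 1 / (1/2 - s)) * ((m : ℝ) + 1) ^ (-(1/2) : ℝ) := by
    have e : ∀ n ∈ F.filter (fun n => ¬ m ≤ n),
        (if m ≤ n then ((m : ℝ) + 1) * ((n : ℝ) + 1) ^ (-2 : ℝ)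
          else ((m : ℝ) + 1) ^ (s - 1) * ((n : ℝ) + 1) ^ (-s)) * ((n : ℝ) + 1) ^ (-(1/2) : ℝ)
        = ((m : ℝ) + 1) ^ (s - 1) * ((n : ℝ) + 1) ^ ((1/2 - s) - 1) := by
      intro n hn
      have hn2 := (Finset.mem_filter.mp hn).2
      have hn1 : (0:ℝ) < (n : ℝ) + 1 := by positivity
      rw [if_neg hn2, mul_assoc, ← rpow_add hn1,
        show -s + -(1/2 : ℝ) = (1/2 - s) - 1 from by ring]
    rw [Finset.sum_congr rfl e, ← Finset.mul_sum]
    have h := head_sum (c := 1/2 - s) hc (by linarith) m (F.filter (fun n => ¬ m ≤ n))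
      (fun n hn => by have := (Finset.mem_filter.mp hn).2; omega)
    have hMs : (0:ℝ) ≤ ((m : ℝ) + 1) ^ (s - 1) := by positivity
    calc ((m : ℝ) + 1) ^ (s - 1) * ∑ n ∈ F.filter (fun n => ¬ m ≤ n),
          ((n : ℝ) + 1) ^ ((1/2 - s) - 1)
        ≤ ((m : ℝ) + 1) ^ (s - 1) * ((1 + 1 / (1/2 - s)) * ((m : ℝ) + 1) ^ (1/2 - s)) :=
          mul_le_mul_of_nonneg_left h hMs
      _ = (1 + 1 / (1/2 - s)) * (((m : ℝ) + 1) ^ (s - 1) * ((m : ℝ) + 1) ^ (1/2 - s)) := by ring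
      _ = (1 + 1 / (1/2 - s)) * ((m : ℝ) + 1) ^ (-(1/2) : ℝ) := by
          rw [← rpow_add hm, show s - 1 + (1/2 - s) = -(1/2 : ℝ) from by ring]
  have hP : (0:ℝ) ≤ ((m : ℝ) + 1) ^ (-(1/2) : ℝ) := by positivity
  have h1c : (0:ℝ) < 1 / (1/2 - s) := by positivity
  refine le_trans (add_le_add part1 part2) ?_
  nlinarith [mul_nonneg (le_of_lt h1c) hP]

private lemma col_bound {s : ℝ} (hs0 : 0 < s) (hs : s < 1/2) (n : ℕ) (F : Finset ℕ) :
    ∑ m ∈ F, (if m ≤ n then ((m : ℝ) + 1) * ((n : ℝ) + 1) ^ (-2 : ℝ)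
        else ((m : ℝ) + 1) ^ (s - 1) * ((n : ℝ) + 1) ^ (-s)) * ((m : ℝ) + 1) ^ (-(1/2) : ℝ)
      ≤ (3 + 2 * (1 / (1/2 - s))) * ((n : ℝ) + 1) ^ (-(1/2) : ℝ) := by
  have hc : 0 < 1/2 - s := by linarith
  have hn1 : (0:ℝ) < (n : ℝ) + 1 := by positivity
  rw [← Finset.sum_filter_add_sum_filter_not F (fun m => m ≤ n)]
  have part1 : ∑ m ∈ F.filter (fun m => m ≤ n),
      (if m ≤ n then ((m : ℝ) + 1) * ((n : ℝ) + 1) ^ (-2 : ℝ)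
        else ((m : ℝ) + 1) ^ (s - 1) * ((n : ℝ) + 1) ^ (-s)) * ((m : ℝ) + 1) ^ (-(1/2) : ℝ)
      ≤ ((n : ℝ) + 1) ^ (-(1/2) : ℝ) := by
    have e : ∀ m ∈ F.filter (fun m => m ≤ n),
        (if m ≤ n then ((m : ℝ) + 1) * ((n : ℝ) + 1) ^ (-2 : ℝ)
          else ((m : ℝ) + 1) ^ (s - 1) * ((n : ℝ) + 1) ^ (-s)) * ((m : ℝ) + 1) ^ (-(1/2) : ℝ)
        = ((n : ℝ) + 1) ^ (-2 : ℝ) * ((m : ℝ) + 1) ^ (1/2 : ℝ) := by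
      intro m hm
      have hm2 := (Finset.mem_filter.mp hm).2
      have hm1 : (0:ℝ) < (m : ℝ) + 1 := by positivity
      rw [if_pos hm2]
      have em : ((m : ℝ) + 1) * ((m : ℝ) + 1) ^ (-(1/2) : ℝ) = ((m : ℝ) + 1) ^ (1/2 : ℝ) := by
        nth_rewrite 1 [← rpow_one ((m : ℝ) + 1)]
        rw [← rpow_add hm1]; norm_num
      calc ((m : ℝ) + 1) * ((n : ℝ) + 1) ^ (-2 : ℝ) * ((m : ℝ) + 1) ^ (-(1/2) : ℝ)
          = ((n : ℝ) + 1) ^ (-2 : ℝ) * (((m : ℝ) + 1) * ((m : ℝ) + 1) ^ (-(1/2) : ℝ)) := by ring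
        _ = ((n : ℝ) + 1) ^ (-2 : ℝ) * ((m : ℝ) + 1) ^ (1/2 : ℝ) := by rw [em]
    rw [Finset.sum_congr rfl e, ← Finset.mul_sum]
    have h := half_head_sum n (F.filter (fun m => m ≤ n))
      (fun m hm => (Finset.mem_filter.mp hm).2)
    have hN : (0:ℝ) ≤ ((n : ℝ) + 1) ^ (-2 : ℝ) := by positivity
    calc ((n : ℝ) + 1) ^ (-2 : ℝ) * ∑ m ∈ F.filter (fun m => m ≤ n), ((m : ℝ) + 1) ^ (1/2 : ℝ)
        ≤ ((n : ℝ) + 1) ^ (-2 : ℝ) * (((n : ℝ) + 1) * ((n : ℝ) + 1) ^ (1/2 : ℝ)) :=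
          mul_le_mul_of_nonneg_left h hN
      _ = ((n : ℝ) + 1) ^ (-(1/2) : ℝ) := by
          nth_rewrite 2 [← rpow_one ((n : ℝ) + 1)]
          rw [← rpow_add hn1, ← rpow_add hn1]; norm_num
  have part2 : ∑ m ∈ F.filter (fun m => ¬ m ≤ n),
      (if m ≤ n then ((m : ℝ) + 1) * ((n : ℝ) + 1) ^ (-2 : ℝ)
        else ((m : ℝ) + 1) ^ (s - 1) * ((n : ℝ) + 1) ^ (-s)) * ((m : ℝ) + 1) ^ (-(1/2) : ℝ)
      ≤ (1 + 1 / (1/2 - s)) * ((n : ℝ) + 1) ^ (-(1/2) : ℝ) := by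
    have e : ∀ m ∈ F.filter (fun m => ¬ m ≤ n),
        (if m ≤ n then ((m : ℝ) + 1) * ((n : ℝ) + 1) ^ (-2 : ℝ)
          else ((m : ℝ) + 1) ^ (s - 1) * ((n : ℝ) + 1) ^ (-s)) * ((m : ℝ) + 1) ^ (-(1/2) : ℝ)
        = ((n : ℝ) + 1) ^ (-s) * ((m : ℝ) + 1) ^ (-((1/2 - s) + 1)) := by
      intro m hm
      have hm2 := (Finset.mem_filter.mp hm).2
      have hm1 : (0:ℝ) < (m : ℝ) + 1 := by positivity
      rw [if_neg hm2]
      calc ((m : ℝ) + 1) ^ (s - 1) * ((n : ℝ) + 1) ^ (-s) * ((m : ℝ) + 1) ^ (-(1/2) : ℝ)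
          = ((n : ℝ) + 1) ^ (-s) * (((m : ℝ) + 1) ^ (s - 1) * ((m : ℝ) + 1) ^ (-(1/2) : ℝ)) := by
            ring
        _ = ((n : ℝ) + 1) ^ (-s) * ((m : ℝ) + 1) ^ (-((1/2 - s) + 1)) := by
            rw [← rpow_add hm1, show s - 1 + -(1/2 : ℝ) = -((1/2 - s) + 1) from by ring]
    rw [Finset.sum_congr rfl e, ← Finset.mul_sum]
    have h := tail_sum (c := 1/2 - s) hc (n + 1) (F.filter (fun m => ¬ m ≤ n))
      (fun m hm => by have := (Finset.mem_filter.mp hm).2; omega)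
    have hdec : ((↑(n + 1) : ℝ) + 1) ^ (-(1/2 - s)) ≤ ((n : ℝ) + 1) ^ (-(1/2 - s)) := by
      apply rpow_le_rpow_of_nonpos hn1 (by push_cast; linarith) (by linarith)
    have hNs : (0:ℝ) ≤ ((n : ℝ) + 1) ^ (-s) := by positivity
    have h1c : (0:ℝ) ≤ 1 + 1 / (1/2 - s) := by positivity
    calc ((n : ℝ) + 1) ^ (-s) * ∑ m ∈ F.filter (fun m => ¬ m ≤ n),
          ((m : ℝ) + 1) ^ (-((1/2 - s) + 1))
        ≤ ((n : ℝ) + 1) ^ (-s) * ((1 + 1 / (1/2 - s)) * ((↑(n + 1) : ℝ) + 1) ^ (-(1/2 - s))) :=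
          mul_le_mul_of_nonneg_left h hNs
      _ ≤ ((n : ℝ) + 1) ^ (-s) * ((1 + 1 / (1/2 - s)) * ((n : ℝ) + 1) ^ (-(1/2 - s))) := by
          apply mul_le_mul_of_nonneg_left _ hNs
          exact mul_le_mul_of_nonneg_left hdec h1c
      _ = (1 + 1 / (1/2 - s)) * (((n : ℝ) + 1) ^ (-s) * ((n : ℝ) + 1) ^ (-(1/2 - s))) := by ring
      _ = (1 + 1 / (1/2 - s)) * ((n : ℝ) + 1) ^ (-(1/2) : ℝ) := by
          rw [← rpow_add hn1, show -s + -(1/2 - s) = -(1/2 : ℝ) from by ring]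
  have hP : (0:ℝ) ≤ ((n : ℝ) + 1) ^ (-(1/2) : ℝ) := by positivity
  have h1c : (0:ℝ) < 1 / (1/2 - s) := by positivity
  refine le_trans (add_le_add part1 part2) ?_
  nlinarith [mul_nonneg (le_of_lt h1c) hP]




private lemma schur {A : ℕ → ℕ → ℝ} {p : ℕ → ℝ} {Cr : ℝ} (hA : ∀ m n, 0 ≤ A m n)
    (hp : ∀ k, 0 < p k) (hCr : 0 ≤ Cr)
    (hrow : ∀ m (F : Finset ℕ), ∑ n ∈ F, A m n * p n ≤ Cr * p m)
    (hcol : ∀ n (F : Finset ℕ), ∑ m ∈ F, A m n * p m ≤ Cr * p n)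
    (x : ℕ → ℝ) (F M : Finset ℕ) :
    ∑ m ∈ M, (∑ n ∈ F, A m n * x n) ^ 2 ≤ Cr ^ 2 * ∑ n ∈ F, x n ^ 2 := by
  have hq : ∀ n, 0 ≤ x n ^ 2 / p n := fun n => div_nonneg (sq_nonneg _) (hp n).le
  have CS : ∀ m, (∑ n ∈ F, A m n * x n) ^ 2
      ≤ (Cr * p m) * ∑ n ∈ F, A m n * (x n ^ 2 / p n) := by
    intro m
    have h1 := Finset.sum_mul_sq_le_sq_mul_sq F (fun n => Real.sqrt (A m n * p n))
      (fun n => Real.sqrt (A m n / p n) * x n)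
    have e1 : ∀ n ∈ F, Real.sqrt (A m n * p n) * (Real.sqrt (A m n / p n) * x n)
        = A m n * x n := by
      intro n _
      rw [← mul_assoc, ← Real.sqrt_mul (mul_nonneg (hA m n) (hp n).le)]
      have e : A m n * p n * (A m n / p n) = (A m n) ^ 2 := by
        field_simp [(hp n).ne']
      rw [e, Real.sqrt_sq (hA m n)]
    have e2 : ∀ n ∈ F, Real.sqrt (A m n * p n) ^ 2 = A m n * p n := fun n _ =>
      Real.sq_sqrt (mul_nonneg (hA m n) (hp n).le)
    have e3 : ∀ n ∈ F, (Real.sqrt (A m n / p n) * x n) ^ 2 = A m n * (x n ^ 2 / p n) := by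
      intro n _
      rw [mul_pow, Real.sq_sqrt (div_nonneg (hA m n) (hp n).le)]
      ring
    rw [Finset.sum_congr rfl e1, Finset.sum_congr rfl e2, Finset.sum_congr rfl e3] at h1
    refine h1.trans ?_
    exact mul_le_mul_of_nonneg_right (hrow m F)
      (Finset.sum_nonneg fun n _ => mul_nonneg (hA m n) (hq n))
  calc ∑ m ∈ M, (∑ n ∈ F, A m n * x n) ^ 2
      ≤ ∑ m ∈ M, (Cr * p m) * ∑ n ∈ F, A m n * (x n ^ 2 / p n) :=
        Finset.sum_le_sum fun m _ => CS m
    _ = ∑ n ∈ F, Cr * ((x n ^ 2 / p n) * ∑ m ∈ M, A m n * p m) := by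
        simp_rw [Finset.mul_sum]
        rw [Finset.sum_comm]
        exact Finset.sum_congr rfl fun n _ => Finset.sum_congr rfl fun m _ => by ring
    _ ≤ ∑ n ∈ F, Cr * ((x n ^ 2 / p n) * (Cr * p n)) :=
        Finset.sum_le_sum fun n _ => mul_le_mul_of_nonneg_left
          (mul_le_mul_of_nonneg_left (hcol n M) (hq n)) hCr
    _ = ∑ n ∈ F, Cr ^ 2 * x n ^ 2 := Finset.sum_congr rfl fun n _ => by
        have h := (hp n).ne'
        field_simp
    _ = Cr ^ 2 * ∑ n ∈ F, x n ^ 2 := (Finset.mul_sum _ _ _).symm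


/-- The matrix `Â_{mn} = m·n⁻²` for `n ≥ m` and `Â_{mn} = m^{s-1}·n^{-s}` for
`m > n` (indices `m, n ≥ 1`) defines a bounded operator on `ℓ²` when
`s ∈ (0, 1/2)`.  Here indices are shifted: `m, n : ℕ` represent `m+1, n+1`. -/
theorem stmt4 (s : ℝ) (hs0 : 0 < s) (hs : s < 1 / 2) :
    ∃ C > 0, ∀ x : ℕ → ℝ, ∀ hx : (Function.support x).Finite, (∀ n, 0 ≤ x n) →
      ∀ M : Finset ℕ,
        ∑ m ∈ M, (∑ n ∈ hx.toFinset,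
            (if m ≤ n then ((m : ℝ) + 1) * ((n : ℝ) + 1) ^ (-2 : ℝ)
              else ((m : ℝ) + 1) ^ (s - 1) * ((n : ℝ) + 1) ^ (-s)) * x n) ^ 2
          ≤ C * ∑ n ∈ hx.toFinset, (x n) ^ 2 := by
  have hc : 0 < 1 / 2 - s := by linarith
  have ht : 0 < 1 / (1 / 2 - s) := one_div_pos.mpr hc
  have hCr : (0:ℝ) < 3 + 2 * (1 / (1 / 2 - s)) := by linarith
  refine ⟨(3 + 2 * (1 / (1 / 2 - s))) ^ 2, pow_pos hCr 2, ?_⟩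
  intro x hx hxpos M
  exact schur (A := fun m n => if m ≤ n then ((m : ℝ) + 1) * ((n : ℝ) + 1) ^ (-2 : ℝ)
      else ((m : ℝ) + 1) ^ (s - 1) * ((n : ℝ) + 1) ^ (-s))
    (p := fun k => ((k : ℝ) + 1) ^ (-(1/2) : ℝ))
    (fun m n => by split <;> positivity)
    (fun k => rpow_pos_of_pos (by positivity) _)
    hCr.le
    (fun m F => row_bound hs0 hs m F)
    (fun n F => col_bound hs0 hs n F)
    x hx.toFinset M
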